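/- arXiv:2511.17716 — 5 statements merged into one kernel-verified Lean document; each statement's English description precedes it below -/
import Mathlib

section
/- Let P be a prime with P ≡ 1 (mod 5), let γ be a positive integer with γ ≡ 4 (mod 5), and let c be a positive integer with 5·c − 1 = γ·P. Let u, v be positive integers such that u·v = c², u ≡ −c (mod γ), v ≡ −c (mod γ), u ≢ −c (mod P), and v ≢ −c (mod P). Then A = (u + c)/γ and B = (v + c)/γ are positive integers, and with C = c·P one has 5/P = 1/A + 1/B + 1/C, with P ∤ A and P ∤ B. -/
/-- ED1 parametrization (forward direction): from admissible parameters `(γ, c, u, v)`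
one reconstructs an ED1 solution `A = (u+c)/γ`, `B = (v+c)/γ`, `C = c·P` of
`5/P = 1/A + 1/B + 1/C` with `P ∤ A` and `P ∤ B`. -/
theorem stmt_6 (P γ c u v : ℕ) (hP : Nat.Prime P) (hP5 : P % 5 = 1)
    (hγpos : 0 < γ) (hγ5 : γ % 5 = 4) (hc : 0 < c) (hu : 0 < u) (hv : 0 < v)
    (hkey : 5 * c - 1 = γ * P) (huv : u * v = c ^ 2)
    (hucγ : (u : ℤ) ≡ -(c : ℤ) [ZMOD (γ : ℤ)])
    (hvcγ : (v : ℤ) ≡ -(c : ℤ) [ZMOD (γ : ℤ)])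
    (hucP : ¬ ((u : ℤ) ≡ -(c : ℤ) [ZMOD (P : ℤ)]))
    (hvcP : ¬ ((v : ℤ) ≡ -(c : ℤ) [ZMOD (P : ℤ)])) :
    γ ∣ u + c ∧ γ ∣ v + c ∧
    0 < (u + c) / γ ∧ 0 < (v + c) / γ ∧
    (5 : ℚ) / (P : ℚ) =
      1 / (((u + c) / γ : ℕ) : ℚ) + 1 / (((v + c) / γ : ℕ) : ℚ) + 1 / ((c : ℚ) * (P : ℚ)) ∧
    ¬ P ∣ (u + c) / γ ∧ ¬ P ∣ (v + c) / γ := by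
  have hdu : γ ∣ u + c := by
    have h : (γ : ℤ) ∣ (u : ℤ) + c := by
      have := hucγ.dvd
      have h2 : (γ : ℤ) ∣ -(-(c : ℤ) - u) := dvd_neg.mpr this
      simpa [neg_sub, sub_neg_eq_add, add_comm] using h2
    exact_mod_cast h
  have hdv : γ ∣ v + c := by
    have h : (γ : ℤ) ∣ (v : ℤ) + c := by
      have := hvcγ.dvd
      have h2 : (γ : ℤ) ∣ -(-(c : ℤ) - v) := dvd_neg.mpr this
      simpa [neg_sub, sub_neg_eq_add, add_comm] using h2
    exact_mod_cast h
  obtain ⟨a, ha⟩ := hdu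
  obtain ⟨b, hb⟩ := hdv
  have hA : (u + c) / γ = a := by rw [ha, Nat.mul_div_cancel_left _ hγpos]
  have hB : (v + c) / γ = b := by rw [hb, Nat.mul_div_cancel_left _ hγpos]
  have hapos : 0 < a := by
    rcases Nat.eq_zero_or_pos a with h | h
    · subst h; simp at ha; omega
    · exact h
  have hbpos : 0 < b := by
    rcases Nat.eq_zero_or_pos b with h | h
    · subst h; simp at hb; omega
    · exact h
  have hPpos : 0 < P := hP.pos
  have hkey' : 5 * c = γ * P + 1 := by omega
  -- rational facts
  have hγQ : (γ : ℚ) ≠ 0 := by positivity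
  have haQ : (a : ℚ) ≠ 0 := by positivity
  have hbQ : (b : ℚ) ≠ 0 := by positivity
  have hcQ : (c : ℚ) ≠ 0 := by positivity
  have hPQ : (P : ℚ) ≠ 0 := by positivity
  have haq : (γ : ℚ) * a = u + c := by exact_mod_cast congrArg (Nat.cast (R := ℚ)) ha.symm
  have hbq : (γ : ℚ) * b = v + c := by exact_mod_cast congrArg (Nat.cast (R := ℚ)) hb.symm
  have huvq : (u : ℚ) * v = (c : ℚ) ^ 2 := by exact_mod_cast huv
  have hkq : (5 : ℚ) * c = γ * P + 1 := by exact_mod_cast hkey'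
  have hq : (c : ℚ) * (a + b) = γ * (a * b) := by
    have hγ2 : ((γ : ℚ) * γ) ≠ 0 := by positivity
    have : (γ : ℚ) * γ * ((c : ℚ) * (a + b)) = (γ : ℚ) * γ * ((γ : ℚ) * (a * b)) := by
      have e1 : (γ : ℚ) * γ * ((c : ℚ) * (a + b)) = c * (γ * a) * γ + c * (γ * b) * γ := by ring
      have e2 : (γ : ℚ) * γ * ((γ : ℚ) * (a * b)) = γ * ((γ * a) * (γ * b)) := by ring
      rw [e1, e2, haq, hbq]
      nlinarith [huvq]
    exact mul_left_cancel₀ hγ2 this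
  have hmain : (5 : ℚ) / (P : ℚ) = 1 / (a : ℚ) + 1 / (b : ℚ) + 1 / ((c : ℚ) * (P : ℚ)) := by
    field_simp
    linear_combination ((a : ℚ) * b) * hkq - (P : ℚ) * hq
  refine ⟨⟨a, ha⟩, ⟨b, hb⟩, by omega, by omega, by rw [hA, hB]; exact hmain, ?_, ?_⟩
  · rw [hA]
    intro hPa
    apply hucP
    have : (P : ℤ) ∣ -(c : ℤ) - u := by
      have h1 : (P : ℤ) ∣ (u : ℤ) + c := by
        have : P ∣ u + c := ha ▸ Dvd.dvd.mul_left hPa γ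
        exact_mod_cast this
      have := dvd_neg.mpr h1
      simpa [neg_add, sub_eq_add_neg] using this
    exact Int.ModEq.symm (Int.modEq_iff_dvd.mpr (by simpa using this)).symm
  · rw [hB]
    intro hPb
    apply hvcP
    have : (P : ℤ) ∣ -(c : ℤ) - v := by
      have h1 : (P : ℤ) ∣ (v : ℤ) + c := by
        have : P ∣ v + c := hb ▸ Dvd.dvd.mul_left hPb γ
        exact_mod_cast this
      have := dvd_neg.mpr h1
      simpa [neg_add, sub_eq_add_neg] using this
    exact Int.ModEq.symm (Int.modEq_iff_dvd.mpr (by simpa using this)).symm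
end

section
/- Let P be a prime with P ≡ 1 (mod 5), and let A, B, c be positive integers with P ∤ A, P ∤ B, and 5/P = 1/A + 1/B + 1/(c·P) (as rational numbers). Then P divides 5·c − 1; and setting γ = (5·c − 1)/P, u = γ·A − c, v = γ·B − c, the numbers u and v are positive integers satisfying u·v = c², γ ≡ 4 (mod 5), u ≡ −c (mod γ), v ≡ −c (mod γ), u ≢ −c (mod P), and v ≢ −c (mod P). -/
set_option maxHeartbeats 1000000

private lemma desc_stmt7 : ∀ (s : ℕ) (q r t M : ℤ), 0 < q → 0 < r → 2 ≤ t → 7 ≤ M →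
    q + r ≤ (s:ℤ) → t*(q^2+r^2) + 2 = M*(t*q*r-1) → False := by
  intro s
  induction s with
  | zero =>
    intro q r t M hq hr _ _ hs _
    have : ((0:ℕ):ℤ) = 0 := rfl
    omega
  | succ n ih =>
    intro q0 r0 t M hq0 hr0 ht hM hs0 h0
    obtain ⟨q, r, hq, hr, hrq, hs, h⟩ : ∃ q r : ℤ, 0 < q ∧ 0 < r ∧ r ≤ q ∧
        q + r ≤ (n:ℤ)+1 ∧ t*(q^2+r^2) + 2 = M*(t*q*r-1) := by
      rcases le_total r0 q0 with hc | hc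
      · exact ⟨q0, r0, hq0, hr0, hc, by push_cast at hs0; linarith, h0⟩
      · exact ⟨r0, q0, hr0, hq0, hc, by push_cast at hs0; linarith, by linear_combination h0⟩
    have hqq' : t*q*(M*r-q) = t*r^2 + M + 2 := by linear_combination -h
    have hq' : 0 < M*r - q := by
      rcases le_or_gt (M*r - q) 0 with hle | hlt
      · exfalso
        have h1 : t*q*(M*r-q) ≤ 0 :=
          mul_nonpos_of_nonneg_of_nonpos (by positivity) hle
        nlinarith [sq_nonneg r]
      · exact hlt
    rcases lt_or_ge (M*r - q) q with hlt | hge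
    · have h' : t*((M*r-q)^2+r^2) + 2 = M*(t*(M*r-q)*r-1) := by linear_combination h
      exact ih (M*r-q) r t M hq' hr ht hM (by linarith) h'
    · have htr2 : 2 ≤ t*r^2 := by nlinarith
      have h1 : 0 ≤ t*((q-r)*((M*r-q)-r)) := by
        apply mul_nonneg (by linarith)
        exact mul_nonneg (by linarith) (by linarith)
      have key3 : M*(t*r^2 - 1) ≤ 2*(t*r^2) + 2 := by nlinarith [h1, hqq']
      have h5 : (0:ℤ) ≤ t*r^2 - 1 := by linarith
      have h4 : 7*(t*r^2-1) ≤ M*(t*r^2-1) := mul_le_mul_of_nonneg_right hM h5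
      linarith

/-- ED1 parametrization (converse direction): every ED1 solution
`5/P = 1/A + 1/B + 1/(c·P)` with `P ∤ A`, `P ∤ B` yields parameters
`γ = (5c−1)/P`, `u = γA − c`, `v = γB − c` with `u·v = c²`, `γ ≡ 4 (mod 5)`,
`u ≡ v ≡ −c (mod γ)` and `u, v ≢ −c (mod P)`. -/
theorem stmt_7 (P A B c : ℕ) (hP : Nat.Prime P) (hP5 : P % 5 = 1)
    (hA : 0 < A) (hB : 0 < B) (hc : 0 < c)
    (hPA : ¬ P ∣ A) (hPB : ¬ P ∣ B)
    (heq : (5 : ℚ) / (P : ℚ) = 1 / (A : ℚ) + 1 / (B : ℚ) + 1 / ((c : ℚ) * (P : ℚ))) :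
    P ∣ 5 * c - 1 ∧
    (let γ : ℕ := (5 * c - 1) / P
     let u : ℤ := (γ : ℤ) * (A : ℤ) - (c : ℤ)
     let v : ℤ := (γ : ℤ) * (B : ℤ) - (c : ℤ)
     0 < u ∧ 0 < v ∧ u * v = (c : ℤ) ^ 2 ∧ γ % 5 = 4 ∧
     u ≡ -(c : ℤ) [ZMOD (γ : ℤ)] ∧ v ≡ -(c : ℤ) [ZMOD (γ : ℤ)] ∧
     ¬ (u ≡ -(c : ℤ) [ZMOD (P : ℤ)]) ∧ ¬ (v ≡ -(c : ℤ) [ZMOD (P : ℤ)])) := by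
  -- basic nonzero facts
  have hP0 : (P:ℚ) ≠ 0 := Nat.cast_ne_zero.2 hP.pos.ne'
  have hA0 : (A:ℚ) ≠ 0 := Nat.cast_ne_zero.2 hA.ne'
  have hB0 : (B:ℚ) ≠ 0 := Nat.cast_ne_zero.2 hB.ne'
  have hc0 : (c:ℚ) ≠ 0 := Nat.cast_ne_zero.2 hc.ne'
  have hPZ : (P:ℤ) ≠ 0 := Int.natCast_ne_zero.2 hP.pos.ne'
  have hAZ : (0:ℤ) < A := by exact_mod_cast hA
  have hBZ : (0:ℤ) < B := by exact_mod_cast hB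
  have hcZ : (0:ℤ) < c := by exact_mod_cast hc
  have hPpos : (0:ℤ) < P := by exact_mod_cast hP.pos
  -- clear denominators
  have hE : (5:ℤ)*((A:ℤ)*B*c) = (c:ℤ)*P*(A+B) + (A:ℤ)*B := by
    field_simp at heq
    have hZ : (5:ℤ)*((A:ℤ)*B*(c*P)) = (((B:ℤ)+A)*((c:ℤ)*P) + (A:ℤ)*B)*P := by
      have h' : (5:ℤ)*A*B*c = P*(B+A)*c + A*B := by exact_mod_cast heq
      linear_combination (P:ℤ)*h'
    exact mul_right_cancel₀ hPZ (by linear_combination hZ)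
  -- P divides 5c-1 (in ℤ)
  have hPint : Prime (P:ℤ) := Nat.prime_iff_prime_int.mp hP
  have hdvdZ : (P:ℤ) ∣ 5*(c:ℤ) - 1 := by
    have h1 : (P:ℤ) ∣ (A:ℤ)*B*(5*(c:ℤ)-1) := ⟨(c:ℤ)*(A+B), by linear_combination hE⟩
    have h2 := (hPint.dvd_mul.mp h1).resolve_left ?_
    · exact h2
    · intro h3
      rcases hPint.dvd_mul.mp h3 with h4 | h4
      · exact hPA (Int.natCast_dvd_natCast.mp h4)
      · exact hPB (Int.natCast_dvd_natCast.mp h4)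
  have hdvdN : P ∣ 5 * c - 1 := by
    have hcast : ((5*c - 1 : ℕ) : ℤ) = 5*(c:ℤ) - 1 := by
      have : 1 ≤ 5*c := by omega
      push_cast [this]; ring
    exact Int.natCast_dvd_natCast.mp (by rw [hcast]; exact hdvdZ)
  refine ⟨hdvdN, ?_⟩
  intro γ u v
  have hγdef : γ = (5*c - 1)/P := rfl
  have hudef : u = (γ:ℤ)*(A:ℤ) - c := rfl
  have hvdef : v = (γ:ℤ)*(B:ℤ) - c := rfl
  have hγP : γ * P = 5*c - 1 := by rw [hγdef]; exact Nat.div_mul_cancel hdvdN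
  have hγPZ : (γ:ℤ) * P = 5*(c:ℤ) - 1 := by
    have h1 : 1 ≤ 5*c := by omega
    have h2 := hγP
    zify [h1] at h2
    exact h2
  have hγpos : 0 < γ := by
    rcases Nat.eq_zero_or_pos γ with h | h
    · exfalso; rw [h] at hγP; omega
    · exact h
  have hγZ : (0:ℤ) < γ := by exact_mod_cast hγpos
  have hγne : (γ:ℤ) ≠ 0 := hγZ.ne'
  -- key equation γ·A·B = c·(A+B)
  have hkey : (γ:ℤ)*((A:ℤ)*B) = (c:ℤ)*((A:ℤ)+B) := by
    apply mul_right_cancel₀ hPZ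
    linear_combination hE + (A:ℤ)*(B:ℤ)*hγPZ
  -- γ coprime to c, hence γ ∣ A+B
  have hcop : IsCoprime (γ:ℤ) (c:ℤ) := ⟨-(P:ℤ), 5, by linear_combination -hγPZ⟩
  have hγdvd : (γ:ℤ) ∣ (A:ℤ)+B :=
    hcop.dvd_of_dvd_mul_left ⟨(A:ℤ)*B, hkey.symm⟩
  obtain ⟨H, hH⟩ := hγdvd
  have hHpos : (0:ℤ) < H := by nlinarith
  have hABc : (A:ℤ)*B = (c:ℤ)*H := by
    apply mul_left_cancel₀ hγne
    rw [hkey, hH]; ring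
  -- positivity of u, v
  have huB : u * B = (c:ℤ)*A := by rw [hudef]; linear_combination hkey
  have hvA : v * A = (c:ℤ)*B := by rw [hvdef]; linear_combination hkey
  have hu : 0 < u := by nlinarith
  have hv : 0 < v := by nlinarith
  -- uv = c²
  have huv : u * v = (c:ℤ)^2 := by
    rw [hudef, hvdef]; linear_combination (γ:ℤ)*hkey
  -- γ % 5 = 4
  have hγ5 : γ % 5 = 4 := by
    have h1 : γ * P % 5 = 4 := by rw [hγP]; omega
    rw [Nat.mul_mod, hP5, mul_one] at h1
    omega
  -- modular congruences mod γ
  have humod : u ≡ -(c:ℤ) [ZMOD (γ:ℤ)] := by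
    rw [Int.ModEq]
    have : (γ:ℤ) ∣ -(c:ℤ) - u := ⟨-(A:ℤ), by rw [hudef]; ring⟩
    exact ((Int.modEq_iff_dvd).mpr this)
  have hvmod : v ≡ -(c:ℤ) [ZMOD (γ:ℤ)] := by
    have : (γ:ℤ) ∣ -(c:ℤ) - v := ⟨-(B:ℤ), by rw [hvdef]; ring⟩
    exact ((Int.modEq_iff_dvd).mpr this)
  -- the heart: P ∤ γ
  have hPγ : ¬ (P ∣ γ) := by
    intro hdvd
    obtain ⟨t, ht⟩ := hdvd
    have ht5 : t % 5 = 4 := by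
      have h1 : P * t % 5 = 4 := by rw [← ht]; exact hγ5
      rw [Nat.mul_mod, hP5, one_mul] at h1
      omega
    have ht4 : 4 ≤ t := by omega
    have ht4Z : (4:ℤ) ≤ (t:ℤ) := by exact_mod_cast ht4
    have htpos : (0:ℤ) < t := by linarith
    have hγt : (γ:ℤ) = (P:ℤ)*t := by exact_mod_cast congrArg (Nat.cast (R := ℤ)) ht
    have hc5 : 5*(c:ℤ) = (P:ℤ)^2*t + 1 := by
      linear_combination (P:ℤ)*hγt - hγPZ
    have hS : (A:ℤ)+B = (P:ℤ)*t*H := by rw [hH, hγt]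
    have key2 : 5*(A:ℤ)^2 = H*((P:ℤ)*t*(5*(A:ℤ) - P) - 1) := by
      linear_combination 5*(A:ℤ)*hS - 5*hABc - H*hc5
    have hH1 : (1:ℤ) ≤ H := hHpos
    -- r := 5A - P is positive
    have hN : 0 < (P:ℤ)*t*(5*(A:ℤ) - P) - 1 := by
      rcases le_or_gt ((P:ℤ)*t*(5*(A:ℤ) - P) - 1) 0 with hle | hlt
      · exfalso
        have h1 : H*((P:ℤ)*t*(5*(A:ℤ) - P) - 1) ≤ 0 :=
          mul_nonpos_of_nonneg_of_nonpos hHpos.le hle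
        nlinarith
      · exact hlt
    have hrpos : 0 < 5*(A:ℤ) - P := by
      rcases le_or_gt (5*(A:ℤ) - P) 0 with hle | hlt
      · exfalso
        have h1 : (P:ℤ)*t*(5*(A:ℤ) - P) ≤ 0 :=
          mul_nonpos_of_nonneg_of_nonpos (by positivity) hle
        linarith
      · exact hlt
    have hM7 : (7:ℤ) ≤ 5*H*t - 2 := by nlinarith
    have final : (t:ℤ)*((P:ℤ)^2 + (5*(A:ℤ) - P)^2) + 2
        = (5*H*t - 2)*((t:ℤ)*(P:ℤ)*(5*(A:ℤ) - P) - 1) := by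
      linear_combination 5*(t:ℤ)*key2
    exact desc_stmt7 ((P:ℤ) + (5*(A:ℤ) - P)).toNat (P:ℤ) (5*(A:ℤ) - P) t (5*H*t - 2)
      hPpos hrpos (by linarith) hM7 (Int.self_le_toNat _) final
  -- non-congruences mod P
  have hunot : ¬ (u ≡ -(c:ℤ) [ZMOD (P:ℤ)]) := by
    intro h
    have h1 : (P:ℤ) ∣ -(c:ℤ) - u := (Int.modEq_iff_dvd).mp h
    have h2 : (P:ℤ) ∣ (γ:ℤ)*A := by
      obtain ⟨k, hk⟩ := h1
      exact ⟨-k, by rw [hudef] at hk; linarith⟩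
    rcases hPint.dvd_mul.mp h2 with h3 | h3
    · exact hPγ (Int.natCast_dvd_natCast.mp h3)
    · exact hPA (Int.natCast_dvd_natCast.mp h3)
  have hvnot : ¬ (v ≡ -(c:ℤ) [ZMOD (P:ℤ)]) := by
    intro h
    have h1 : (P:ℤ) ∣ -(c:ℤ) - v := (Int.modEq_iff_dvd).mp h
    have h2 : (P:ℤ) ∣ (γ:ℤ)*B := by
      obtain ⟨k, hk⟩ := h1
      exact ⟨-k, by rw [hvdef] at hk; linarith⟩
    rcases hPint.dvd_mul.mp h2 with h3 | h3
    · exact hPγ (Int.natCast_dvd_natCast.mp h3)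
    · exact hPB (Int.natCast_dvd_natCast.mp h3)
  exact ⟨hu, hv, huv, hγ5, humod, hvmod, hunot, hvnot⟩
end

section
/- Let P and δ be positive integers, and let r, s be positive integers such that r·s = 5·P·δ + 1, r ≡ 4 (mod 5), and s ≡ 4 (mod 5). Set b = (r + 1)/5 and c = (s + 1)/5, which are positive integers. If δ divides b·c, then with A = b·c/δ, B = b·P, C = c·P one has 5/P = 1/A + 1/B + 1/C (as rational numbers). -/
/-- ED2 construction: from a factorization `r·s = 5·P·δ + 1` with `r ≡ s ≡ 4 (mod 5)`,
the numbers `b = (r+1)/5`, `c = (s+1)/5` are positive integers, and if `δ ∣ b·c`, then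
`A = b·c/δ`, `B = b·P`, `C = c·P` solve `5/P = 1/A + 1/B + 1/C`. -/
theorem stmt_9 (P δ r s : ℕ) (hP : 0 < P) (hδ : 0 < δ) (hr : 0 < r) (hs : 0 < s)
    (hrs : r * s = 5 * P * δ + 1) (hr5 : r % 5 = 4) (hs5 : s % 5 = 4) :
    0 < (r + 1) / 5 ∧ 0 < (s + 1) / 5 ∧
    (δ ∣ ((r + 1) / 5) * ((s + 1) / 5) →
      (5 : ℚ) / (P : ℚ) =
        1 / (((((r + 1) / 5) * ((s + 1) / 5)) / δ : ℕ) : ℚ) +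
        1 / ((((r + 1) / 5 : ℕ) : ℚ) * (P : ℚ)) +
        1 / ((((s + 1) / 5 : ℕ) : ℚ) * (P : ℚ))) := by
  set b := (r + 1) / 5 with hb
  set c := (s + 1) / 5 with hc
  have hbr : r + 1 = 5 * b := by omega
  have hcs : s + 1 = 5 * c := by omega
  have hbpos : 0 < b := by omega
  have hcpos : 0 < c := by omega
  refine ⟨hbpos, hcpos, fun hdvd => ?_⟩
  -- key identity : 5*b*c = P*δ + b + c
  have hkey : 5 * (b * c) = P * δ + b + c := by nlinarith [hbr, hcs, hrs]
  obtain ⟨A, hA⟩ := hdvd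
  have hAdiv : b * c / δ = A := by
    rw [hA]; exact Nat.mul_div_cancel_left A hδ
  rw [hAdiv]
  have hApos : 0 < A := by
    rcases Nat.eq_zero_or_pos A with h | h
    · simp [h] at hA; omega
    · exact h
  have hPq : (P : ℚ) ≠ 0 := Nat.cast_ne_zero.mpr hP.ne'
  have hAq : (A : ℚ) ≠ 0 := Nat.cast_ne_zero.mpr hApos.ne'
  have hbq : (b : ℚ) ≠ 0 := Nat.cast_ne_zero.mpr hbpos.ne'
  have hcq : (c : ℚ) ≠ 0 := Nat.cast_ne_zero.mpr hcpos.ne'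
  have hAq2 : (b : ℚ) * c = δ * A := by exact_mod_cast congrArg (Nat.cast : ℕ → ℚ) hA
  have hkq : 5 * ((b : ℚ) * c) = P * δ + b + c := by exact_mod_cast congrArg (Nat.cast : ℕ → ℚ) hkey
  have hδq : (δ : ℚ) ≠ 0 := Nat.cast_ne_zero.mpr hδ.ne'
  field_simp
  linear_combination (A:ℚ) * hkq - (P:ℚ) * hAq2
end

section
/- Let P be a prime with P ≠ 5, and let A ≤ B ≤ C be positive integers with 5/P = 1/A + 1/B + 1/C (as rational numbers). Then P does not divide A, and the number of elements of the multiset {A, B, C} divisible by P is exactly 1 or exactly 2; that is, either exactly one of B, C is divisible by P, or both B and C are divisible by P. -/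
/-- Classification of solutions: for a prime `P ≠ 5` and positive integers `A ≤ B ≤ C`
with `5/P = 1/A + 1/B + 1/C`, the minimal denominator `A` is not divisible by `P`, and
either exactly one of `B, C` is divisible by `P`, or both `B` and `C` are divisible by `P`
(so the number of denominators divisible by `P` is exactly 1 or exactly 2). -/
theorem stmt_14 (P : ℕ) (hP : Nat.Prime P) (hP5 : P ≠ 5)
    (A B C : ℕ) (hA : 0 < A) (hB : 0 < B) (hC : 0 < C)
    (hAB : A ≤ B) (hBC : B ≤ C)
    (heq : (5 : ℚ) / (P : ℚ) = 1 / (A : ℚ) + 1 / (B : ℚ) + 1 / (C : ℚ)) :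
    ¬ P ∣ A ∧
      ((P ∣ B ∧ ¬ P ∣ C) ∨ (¬ P ∣ B ∧ P ∣ C) ∨ (P ∣ B ∧ P ∣ C)) := by
  have hPpos : (0:ℚ) < P := by exact_mod_cast hP.pos
  have hAq : (0:ℚ) < A := by exact_mod_cast hA
  have hBq : (0:ℚ) < B := by exact_mod_cast hB
  have hCq : (0:ℚ) < C := by exact_mod_cast hC
  have hA0 : (A:ℚ) ≠ 0 := ne_of_gt hAq
  have hB0 : (B:ℚ) ≠ 0 := ne_of_gt hBq
  have hC0 : (C:ℚ) ≠ 0 := ne_of_gt hCq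
  have hP0 : (P:ℚ) ≠ 0 := ne_of_gt hPpos
  have h3 : (5:ℚ)/P ≤ 3/A := by
    rw [heq]
    have h1 : (1:ℚ)/B ≤ 1/A := by
      apply one_div_le_one_div_of_le hAq; exact_mod_cast hAB
    have h2 : (1:ℚ)/C ≤ 1/A := by
      apply one_div_le_one_div_of_le hAq; exact_mod_cast le_trans hAB hBC
    have h4 : (3:ℚ)/A = 1/A + 1/A + 1/A := by ring
    linarith
  have hAP : A < P := by
    have h5q : (5:ℚ)*A ≤ 3*P := (div_le_div_iff₀ hPpos hAq).mp h3
    have h5 : 5*A ≤ 3*P := by exact_mod_cast h5q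
    omega
  have hnA : ¬ P ∣ A := fun h => absurd (Nat.le_of_dvd hA h) (not_le.mpr hAP)
  have hkeyq : (5:ℚ) * (A*B*C) = P * (B*C + A*C + A*B) := by
    field_simp at heq
    ring_nf at heq ⊢
    linarith
  have hkey : 5 * (A*B*C) = P * (B*C + A*C + A*B) := by exact_mod_cast hkeyq
  have hdvd : P ∣ 5 * (A*B*C) := Dvd.intro _ hkey.symm
  have hn5 : ¬ P ∣ 5 := by
    intro h
    rcases (Nat.prime_five.eq_one_or_self_of_dvd P h) with h1 | h1
    · exact hP.one_lt.ne' h1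
    · exact hP5 h1
  have habc : P ∣ A*B*C := (hP.dvd_mul.mp hdvd).resolve_left hn5
  have hbc : P ∣ B ∨ P ∣ C := by
    rcases hP.dvd_mul.mp habc with h | h
    · exact Or.inl ((hP.dvd_mul.mp h).resolve_left hnA)
    · exact Or.inr h
  refine ⟨hnA, ?_⟩
  by_cases hb : P ∣ B <;> by_cases hc : P ∣ C <;> tauto
end

section
/- Let r be a positive integer with r ≡ 4 (mod 5). Then the set of primes P with P ≡ 1 (mod 5) and r | (5·P + 1) is infinite; and for every such prime P, setting b = (r + 1)/5, s = (5·P + 1)/r, c = (s + 1)/5, and A = b·c, the numbers b, c, A are positive integers and 5/P = 1/A + 1/(b·P) + 1/(c·P) (as rational numbers). -/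
/-- Case `δ = 1`: for every `r ≡ 4 (mod 5)` there are infinitely many primes
`P ≡ 1 (mod 5)` with `r ∣ 5P + 1`, and each such prime yields the ED2 solution
`b = (r+1)/5`, `s = (5P+1)/r`, `c = (s+1)/5`, `A = b·c` of
`5/P = 1/A + 1/(b·P) + 1/(c·P)`. -/
theorem stmt_18 (r : ℕ) (hr : 0 < r) (hr5 : r % 5 = 4) :
    {P : ℕ | Nat.Prime P ∧ P % 5 = 1 ∧ r ∣ 5 * P + 1}.Infinite ∧
    ∀ P : ℕ, Nat.Prime P → P % 5 = 1 → r ∣ 5 * P + 1 →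
      (let b := (r + 1) / 5
       let s := (5 * P + 1) / r
       let c := (s + 1) / 5
       let A := b * c
       0 < b ∧ 0 < c ∧ 0 < A ∧
         (5 : ℚ) / (P : ℚ) =
           1 / (A : ℚ) + 1 / ((b : ℚ) * (P : ℚ)) + 1 / ((c : ℚ) * (P : ℚ))) := by
  have h5p : Nat.Prime 5 := by norm_num
  have hcop : Nat.Coprime 5 r := (Nat.Prime.coprime_iff_not_dvd h5p).mpr (by omega)
  constructor
  · -- infinitude via Dirichlet
    haveI : NeZero r := ⟨hr.ne'⟩
    haveI : NeZero (5 * r) := ⟨by positivity⟩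
    have h5u : IsUnit (5 : ZMod r) := by
      rw [show ((5 : ZMod r)) = ((5 : ℕ) : ZMod r) by push_cast; ring,
        ZMod.isUnit_iff_coprime]
      exact hcop
    have h51 : (5 : ZMod r)⁻¹ * 5 = 1 := ZMod.inv_mul_of_unit _ h5u
    have hinv : IsUnit (-(5 : ZMod r)⁻¹) :=
      (IsUnit.of_mul_eq_one 5 h51).neg
    let e := ZMod.chineseRemainder hcop
    let a : ZMod (5 * r) := e.symm (1, -(5 : ZMod r)⁻¹)
    have hau : IsUnit a := by
      have hp : IsUnit ((1, -(5 : ZMod r)⁻¹) : ZMod 5 × ZMod r) := by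
        obtain ⟨v, hv⟩ := isUnit_iff_exists.mp hinv
        exact IsUnit.of_mul_eq_one (1, v) (by
          rw [Prod.mk_mul_mk, one_mul, hv.1]; rfl)
      exact hp.map (e.symm : ZMod 5 × ZMod r →+* ZMod (5 * r))
    apply Set.Infinite.mono _ (Nat.infinite_setOfPred_prime_and_eq_mod hau)
    intro p hp
    obtain ⟨hp1, hp2⟩ := hp
    have he : e ((p : ℕ) : ZMod (5 * r)) = ((p : ZMod 5), (p : ZMod r)) := by
      exact (map_natCast e p).trans (Prod.ext (Prod.fst_natCast p) (Prod.snd_natCast p))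
    have he2 : ((p : ZMod 5), (p : ZMod r)) = (1, -(5 : ZMod r)⁻¹) := by
      rw [← he, hp2]
      exact e.apply_symm_apply _
    have h1 : (p : ZMod 5) = 1 := congrArg Prod.fst he2
    have h2 : (p : ZMod r) = -(5 : ZMod r)⁻¹ := congrArg Prod.snd he2
    refine ⟨hp1, ?_, ?_⟩
    · have := (ZMod.natCast_eq_natCast_iff' p 1 5).mp (by rw [h1]; norm_cast)
      omega
    · have h0 : ((5 * p + 1 : ℕ) : ZMod r) = 0 := by
        push_cast
        rw [h2]
        linear_combination -h51
      exact (ZMod.natCast_eq_zero_iff _ _).mp h0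
  · intro P hP hP5 hdvd
    intro b s c A
    obtain ⟨s0, hs0⟩ := hdvd
    have hs : s = s0 := by
      show (5 * P + 1) / r = s0
      rw [hs0]; exact Nat.mul_div_cancel_left _ hr
    have hb5 : 5 ∣ r + 1 := by omega
    have hb : 5 * b = r + 1 := Nat.mul_div_cancel' hb5
    have hs04 : s0 % 5 = 4 := by
      have hm := Nat.mul_mod r s0 5
      rw [hr5] at hm
      have h1 : (r * s0) % 5 = 1 := by rw [← hs0]; omega
      omega
    have hc5 : 5 ∣ s + 1 := by rw [hs]; omega
    have hc : 5 * c = s + 1 := Nat.mul_div_cancel' hc5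
    have hbpos : 0 < b := by omega
    have hcpos : 0 < c := by omega
    have key : 5 * (b * c) = P + b + c := by nlinarith [hs0, hb, hc, hs]
    refine ⟨hbpos, hcpos, by positivity, ?_⟩
    have hP0 : (P : ℚ) ≠ 0 := Nat.cast_ne_zero.mpr hP.pos.ne'
    have hb0 : (b : ℚ) ≠ 0 := Nat.cast_ne_zero.mpr hbpos.ne'
    have hc0 : (c : ℚ) ≠ 0 := Nat.cast_ne_zero.mpr hcpos.ne'
    have keyQ : (5 : ℚ) * ((b : ℚ) * c) = P + b + c := by exact_mod_cast key
    show (5 : ℚ) / P = 1 / (↑(b * c) : ℚ) + 1 / (b * P) + 1 / (c * P)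
    push_cast
    field_simp
    linear_combination keyQ
end
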